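/- Let E and F be real Banach lattices and T : E → F a positive bounded linear operator which is ε-minimum preserving. Then for any n ≥ 1 and any x₁, …, x_n in the closed unit ball of E with x_i ≥ 0, ‖T(⋁_{i=1}^n x_i) − ⋁_{i=1}^n (Tx_i)‖ ≤ ε·⌈log₂ n⌉·n. -/

import Mathlib

open Finset

section Aux

variable {α : Type*} [NormedAddCommGroup α] [Lattice α] [IsOrderedAddMonoid α] [HasSolidNorm α] [NormedSpace ℝ α]

lemma aux_pow_nsmul_nonneg : ∀ (k : ℕ) (y : α), 0 ≤ (2 ^ k) • y → 0 ≤ y := by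
  intro k
  induction k with
  | zero => intro y hy; simpa using hy
  | succ k ih =>
    intro y hy
    apply nsmul_two_semiclosed
    apply ih
    rwa [← mul_smul, ← pow_succ]

lemma aux_smul_nonneg {c : ℝ} (hc : 0 ≤ c) {x : α} (hx : 0 ≤ x) : 0 ≤ c • x := by
  have key : ∀ k : ℕ, 0 ≤ ((⌊c * 2 ^ k⌋₊ : ℝ) / 2 ^ k) • x := by
    intro k
    apply aux_pow_nsmul_nonneg k
    have h2 : ((2:ℝ) ^ k) ≠ 0 := by positivity
    rw [← Nat.cast_smul_eq_nsmul ℝ, smul_smul]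
    push_cast
    rw [mul_div_cancel₀ _ h2]
    rw [Nat.cast_smul_eq_nsmul]
    exact nsmul_nonneg hx _
  have hlim : Filter.Tendsto (fun k : ℕ => ((⌊c * 2 ^ k⌋₊ : ℝ) / 2 ^ k)) Filter.atTop
      (nhds c) := by
    have hlow : Filter.Tendsto (fun k : ℕ => c - (2⁻¹ : ℝ) ^ k) Filter.atTop (nhds (c - 0)) :=
      Filter.Tendsto.sub tendsto_const_nhds
        (tendsto_pow_atTop_nhds_zero_of_lt_one (by norm_num) (by norm_num))
    rw [sub_zero] at hlow
    apply tendsto_of_tendsto_of_tendsto_of_le_of_le hlow tendsto_const_nhds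
    · intro k
      have h1 : c * 2 ^ k - 1 < (⌊c * 2 ^ k⌋₊ : ℝ) := by
        have := Nat.sub_one_lt_floor (c * 2 ^ k)
        linarith
      have h2 : (0:ℝ) < 2 ^ k := by positivity
      dsimp only
      rw [le_div_iff₀ h2]
      have hinv : (2⁻¹ : ℝ) ^ k * 2 ^ k = 1 := by
        rw [← mul_pow]; norm_num
      nlinarith
    · intro k
      have h2 : (0:ℝ) < 2 ^ k := by positivity
      dsimp only
      rw [div_le_iff₀ h2]
      exact Nat.floor_le (by positivity)
  have hlim2 : Filter.Tendsto (fun k : ℕ => ((⌊c * 2 ^ k⌋₊ : ℝ) / 2 ^ k) • x) Filter.atTop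
      (nhds (c • x)) := hlim.smul_const x
  exact ge_of_tendsto' hlim2 key

lemma aux_smul_le_smul {c : ℝ} (hc : 0 ≤ c) {a b : α} (h : a ≤ b) : c • a ≤ c • b := by
  have := aux_smul_nonneg hc (sub_nonneg.2 h)
  rw [smul_sub] at this
  exact sub_nonneg.1 this

lemma aux_smul_inf {c : ℝ} (hc : 0 < c) (a b : α) : c • (a ⊓ b) = c • a ⊓ c • b := by
  refine le_antisymm (le_inf (aux_smul_le_smul hc.le inf_le_left)
    (aux_smul_le_smul hc.le inf_le_right)) ?_
  have h1 : c⁻¹ • (c • a ⊓ c • b) ≤ a ⊓ b := by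
    refine le_inf ?_ ?_
    · have := aux_smul_le_smul (inv_nonneg.2 hc.le) (inf_le_left (a := c • a) (b := c • b))
      rwa [inv_smul_smul₀ hc.ne'] at this
    · have := aux_smul_le_smul (inv_nonneg.2 hc.le) (inf_le_right (a := c • a) (b := c • b))
      rwa [inv_smul_smul₀ hc.ne'] at this
  have := aux_smul_le_smul hc.le h1
  rwa [smul_inv_smul₀ hc.ne'] at this

/-- Ceiling-log arithmetic: if `N ≥ 2`, `1 ≤ m` and `2m ≤ N+1` then
`⌈logb 2 m⌉ ≤ ⌈logb 2 N⌉ - 1`. -/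
lemma aux_log_ceil {N m : ℕ} (hN : 2 ≤ N) (hm : 1 ≤ m) (hmN : 2 * m ≤ N + 1) :
    ⌈Real.logb 2 m⌉ ≤ ⌈Real.logb 2 N⌉ - 1 := by
  set k : ℤ := ⌈Real.logb 2 N⌉ with hk
  have hb : (1:ℝ) < 2 := by norm_num
  have hk1 : 1 ≤ k := by
    have h1 : (1:ℝ) ≤ Real.logb 2 N := by
      have := Real.logb_le_logb_of_le hb (by norm_num : (0:ℝ) < 2)
        (by exact_mod_cast hN : (2:ℝ) ≤ N)
      rwa [Real.logb_self_eq_one hb] at this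
    calc (1:ℤ) = ⌈(1:ℝ)⌉ := by norm_num
    _ ≤ k := Int.ceil_le_ceil h1
  set K : ℕ := k.toNat with hK
  have hKk : (K : ℤ) = k := Int.toNat_of_nonneg (by linarith)
  have hK1 : 1 ≤ K := by omega
  -- N ≤ 2 ^ K in ℕ
  have hNpos : (0:ℝ) < (N:ℝ) := by positivity
  have hNK : N ≤ 2 ^ K := by
    have h1 : Real.logb 2 N ≤ (k : ℝ) := Int.le_ceil _
    have h2 : (N : ℝ) ≤ (2:ℝ) ^ (k : ℝ) := by
      rw [← Real.rpow_logb (b := 2) (by norm_num) (by norm_num) hNpos]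
      exact Real.rpow_le_rpow_of_exponent_le (by norm_num) h1
    have h3 : ((2:ℝ) ^ (k : ℝ)) = ((2 ^ K : ℕ) : ℝ) := by
      rw [← hKk]
      push_cast
      exact Real.rpow_natCast 2 K
    rw [h3] at h2
    exact_mod_cast h2
  -- m ≤ 2 ^ (K - 1)
  have hmK : m ≤ 2 ^ (K - 1) := by
    have h2K : 2 ^ K = 2 * 2 ^ (K - 1) := by
      conv_lhs => rw [show K = (K - 1) + 1 by omega]
      rw [pow_succ]; ring
    omega
  -- conclude
  have hlog : Real.logb 2 m ≤ ((k - 1 : ℤ) : ℝ) := by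
    have h1 : (m:ℝ) ≤ (2:ℝ) ^ ((K - 1 : ℕ) : ℝ) := by
      rw [Real.rpow_natCast]
      exact_mod_cast hmK
    have h2 : Real.logb 2 m ≤ ((K - 1 : ℕ) : ℝ) :=
      (Real.logb_le_iff_le_rpow hb (by positivity : (0:ℝ) < (m:ℝ))).2 h1
    have hcast : ((K - 1 : ℕ) : ℤ) = k - 1 := by omega
    have : ((K - 1 : ℕ) : ℝ) = ((k - 1 : ℤ) : ℝ) := by exact_mod_cast hcast
    rwa [this] at h2
  calc ⌈Real.logb 2 m⌉ ≤ ⌈((k - 1 : ℤ) : ℝ)⌉ := Int.ceil_le_ceil hlog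
  _ = k - 1 := Int.ceil_intCast _

end Aux

section Main

variable {E F : Type*}
  [NormedAddCommGroup E] [Lattice E] [IsOrderedAddMonoid E] [HasSolidNorm E] [NormedSpace ℝ E]
  [NormedAddCommGroup F] [Lattice F] [IsOrderedAddMonoid F] [HasSolidNorm F] [NormedSpace ℝ F]

/-- Scaled minimum-preservation: merge cost for vectors of norm at most `m`. -/
lemma aux_key (ε : ℝ) (T : E →L[ℝ] F)
    (hMP : ∀ x y : E, 0 ≤ x → 0 ≤ y → ‖x‖ ≤ 1 → ‖y‖ ≤ 1 → ‖T x ⊓ T y - T (x ⊓ y)‖ ≤ ε)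
    (m : ℕ) (hm : 1 ≤ m) (u v : E) (hu : 0 ≤ u) (hv : 0 ≤ v)
    (hum : ‖u‖ ≤ m) (hvm : ‖v‖ ≤ m) :
    ‖T u ⊓ T v - T (u ⊓ v)‖ ≤ ε * m := by
  have hc : (0:ℝ) < m := by exact_mod_cast hm
  set c : ℝ := (m : ℝ)⁻¹ with hcdef
  have hcpos : 0 < c := by positivity
  have h1 := hMP (c • u) (c • v) (aux_smul_nonneg hcpos.le hu) (aux_smul_nonneg hcpos.le hv)
    (by rw [norm_smul, Real.norm_eq_abs, abs_of_pos hcpos, hcdef, inv_mul_le_one₀ hc]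
        exact hum)
    (by rw [norm_smul, Real.norm_eq_abs, abs_of_pos hcpos, hcdef, inv_mul_le_one₀ hc]
        exact hvm)
  have h2 : T (c • u) ⊓ T (c • v) - T (c • u ⊓ c • v) = c • (T u ⊓ T v - T (u ⊓ v)) := by
    rw [← aux_smul_inf hcpos u v, map_smul, map_smul, map_smul, ← aux_smul_inf hcpos,
      smul_sub]
  rw [h2, norm_smul, Real.norm_eq_abs, abs_of_pos hcpos, hcdef] at h1
  rw [inv_mul_le_iff₀ hc] at h1
  linarith [h1]

/-- Main divide-and-conquer induction. -/
lemma aux_main (ε : ℝ) (hε : 0 ≤ ε) (T : E →L[ℝ] F)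
    (hpos : ∀ x : E, 0 ≤ x → 0 ≤ T x)
    (hMP : ∀ x y : E, 0 ≤ x → 0 ≤ y → ‖x‖ ≤ 1 → ‖y‖ ≤ 1 → ‖T x ⊓ T y - T (x ⊓ y)‖ ≤ ε) :
    ∀ (N : ℕ) {ι : Type*} [DecidableEq ι] (s : Finset ι) (hs : s.Nonempty) (x : ι → E),
      s.card = N → (∀ i ∈ s, 0 ≤ x i) → (∀ i ∈ s, ‖x i‖ ≤ 1) →
      ‖T (s.sup' hs x) - s.sup' hs (fun i => T (x i))‖ ≤
        ε * (⌈Real.logb 2 N⌉ : ℝ) * N := by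
  intro N
  induction N using Nat.strong_induction_on with
  | _ N IH =>
    intro ι _ s hs x hcard hx hx1
    rcases Nat.lt_or_ge N 2 with hN2 | hN2
    · -- N = 0 or 1; N = 0 impossible
      have hN0 : N ≠ 0 := by
        rw [← hcard]; exact Finset.card_ne_zero_of_mem hs.choose_spec
      have hN1 : N = 1 := by omega
      subst hN1
      obtain ⟨i, rfl⟩ := Finset.card_eq_one.1 hcard
      simp [Real.logb_one]
    · -- N ≥ 2 : split
      set m₁ : ℕ := (N + 1) / 2 with hm₁
      have hm₁le : m₁ ≤ N := by omega
      obtain ⟨t, hts, htc⟩ := Finset.exists_subset_card_eq (hcard ▸ hm₁le)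
      have hstc : (s \ t).card = N - m₁ := by
        rw [Finset.card_sdiff_of_subset hts, hcard, htc]
      set m₂ : ℕ := N - m₁ with hm₂
      have hm₁1 : 1 ≤ m₁ := by omega
      have hm₂1 : 1 ≤ m₂ := by omega
      have ht : t.Nonempty := Finset.card_pos.1 (by omega)
      have hst : (s \ t).Nonempty := Finset.card_pos.1 (by omega)
      have hunion : t ∪ (s \ t) = s := Finset.union_sdiff_of_subset hts
      -- abbreviations
      set u : E := t.sup' ht x with hu
      set v : E := (s \ t).sup' hst x with hv
      set a : F := t.sup' ht (fun i => T (x i)) with ha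
      set b : F := (s \ t).sup' hst (fun i => T (x i)) with hb
      have hsup : s.sup' hs x = u ⊔ v := by
        rw [← Finset.sup'_union ht hst x, Finset.sup'_congr _ hunion (fun _ _ => rfl)]
      have hsupT : s.sup' hs (fun i => T (x i)) = a ⊔ b := by
        rw [← Finset.sup'_union ht hst (fun i => T (x i)),
          Finset.sup'_congr _ hunion (fun _ _ => rfl)]
      -- positivity and norm bounds
      have hsupnn : ∀ (w : Finset ι) (hw : w.Nonempty), w ⊆ s → 0 ≤ w.sup' hw x := by
        intro w hw hws
        obtain ⟨i, hi⟩ := hw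
        exact le_trans (hx i (hws hi)) (Finset.le_sup' x hi)
      have hsupnorm : ∀ (w : Finset ι) (hw : w.Nonempty), w ⊆ s → ‖w.sup' hw x‖ ≤ w.card := by
        intro w hw hws
        have hle : w.sup' hw x ≤ ∑ i ∈ w, x i := by
          apply Finset.sup'_le
          intro i hi
          exact Finset.single_le_sum (fun j hj => hx j (hws hj)) hi
        have h0 : 0 ≤ w.sup' hw x := hsupnn w hw hws
        have habs : |w.sup' hw x| ≤ |∑ i ∈ w, x i| := by
          rw [abs_of_nonneg h0, abs_of_nonneg (Finset.sum_nonneg (fun j hj => hx j (hws hj)))]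
          exact hle
        calc ‖w.sup' hw x‖ ≤ ‖∑ i ∈ w, x i‖ := HasSolidNorm.solid habs
        _ ≤ ∑ i ∈ w, ‖x i‖ := norm_sum_le _ _
        _ ≤ ∑ _i ∈ w, (1:ℝ) := Finset.sum_le_sum (fun j hj => hx1 j (hws hj))
        _ = w.card := by simp
      have hu0 : 0 ≤ u := hsupnn t ht hts
      have hv0 : 0 ≤ v := hsupnn _ hst (Finset.sdiff_subset)
      have hunorm : ‖u‖ ≤ (N:ℝ) := by
        refine le_trans (hsupnorm t ht hts) ?_
        rw [htc]; exact_mod_cast hm₁le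
      have hvnorm : ‖v‖ ≤ (N:ℝ) := by
        refine le_trans (hsupnorm _ hst (Finset.sdiff_subset)) ?_
        rw [hstc]; exact_mod_cast Nat.sub_le N m₁
      -- merge cost
      have hmerge : ‖T u ⊓ T v - T (u ⊓ v)‖ ≤ ε * N :=
        aux_key ε T hMP N (by omega) u v hu0 hv0 hunorm hvnorm
      -- algebraic identity
      have hid : T (u ⊔ v) - a ⊔ b =
          (T u ⊓ T v - T (u ⊓ v)) + (T u ⊔ T v - a ⊔ b) := by
        have h1 : T (u ⊓ v) + T (u ⊔ v) = T u + T v := by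
          rw [← map_add, inf_add_sup]
          exact map_add T u v
        have h2 : (T u ⊓ T v) + (T u ⊔ T v) = T u + T v := inf_add_sup _ _
        have h3 : T (u ⊔ v) - T u ⊔ T v = T u ⊓ T v - T (u ⊓ v) := by
          have := h1.trans h2.symm
          abel_nf
          linear_combination (norm := abel_nf) this
        abel_nf
        abel_nf at h3
        linear_combination (norm := abel_nf) h3
      -- induction hypotheses
      have IH1 : ‖T u - a‖ ≤ ε * (⌈Real.logb 2 m₁⌉ : ℝ) * m₁ := by
        rw [hu, ha]
        exact IH m₁ (by omega) t ht x htc (fun i hi => hx i (hts hi))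
          (fun i hi => hx1 i (hts hi))
      have IH2 : ‖T v - b‖ ≤ ε * (⌈Real.logb 2 m₂⌉ : ℝ) * m₂ := by
        rw [hv, hb]
        exact IH m₂ (by omega) (s \ t) hst x hstc
          (fun i hi => hx i (Finset.sdiff_subset hi))
          (fun i hi => hx1 i (Finset.sdiff_subset hi))
      -- put it together
      have hchain : ‖T (s.sup' hs x) - s.sup' hs (fun i => T (x i))‖ ≤
          ε * N + (ε * (⌈Real.logb 2 m₁⌉ : ℝ) * m₁ + ε * (⌈Real.logb 2 m₂⌉ : ℝ) * m₂) := by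
        rw [hsup, hsupT, hid]
        calc ‖(T u ⊓ T v - T (u ⊓ v)) + (T u ⊔ T v - a ⊔ b)‖
            ≤ ‖T u ⊓ T v - T (u ⊓ v)‖ + ‖T u ⊔ T v - a ⊔ b‖ := norm_add_le _ _
        _ ≤ ε * N + (‖T u - a‖ + ‖T v - b‖) := by
            gcongr
            exact norm_sup_sub_sup_le_add_norm _ _ _ _
        _ ≤ ε * N + (ε * (⌈Real.logb 2 m₁⌉ : ℝ) * m₁ + ε * (⌈Real.logb 2 m₂⌉ : ℝ) * m₂) := by
            gcongr
      refine hchain.trans ?_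
      -- arithmetic
      have hc1 : ⌈Real.logb 2 m₁⌉ ≤ ⌈Real.logb 2 N⌉ - 1 :=
        aux_log_ceil hN2 hm₁1 (by omega)
      have hc2 : ⌈Real.logb 2 m₂⌉ ≤ ⌈Real.logb 2 N⌉ - 1 :=
        aux_log_ceil hN2 hm₂1 (by omega)
      have hc1' : (⌈Real.logb 2 m₁⌉ : ℝ) ≤ (⌈Real.logb 2 N⌉ : ℝ) - 1 := by exact_mod_cast hc1
      have hc2' : (⌈Real.logb 2 m₂⌉ : ℝ) ≤ (⌈Real.logb 2 N⌉ : ℝ) - 1 := by exact_mod_cast hc2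
      have hc10 : (0:ℝ) ≤ (⌈Real.logb 2 m₁⌉ : ℝ) := by
        have : (0:ℤ) ≤ ⌈Real.logb 2 m₁⌉ := by
          apply Int.ceil_nonneg
          exact Real.logb_nonneg (by norm_num) (by exact_mod_cast hm₁1)
        exact_mod_cast this
      have hc20 : (0:ℝ) ≤ (⌈Real.logb 2 m₂⌉ : ℝ) := by
        have : (0:ℤ) ≤ ⌈Real.logb 2 m₂⌉ := by
          apply Int.ceil_nonneg
          exact Real.logb_nonneg (by norm_num) (by exact_mod_cast hm₂1)
        exact_mod_cast this
      have hsum : (m₁ : ℝ) + (m₂ : ℝ) = (N : ℝ) := by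
        have : m₁ + m₂ = N := by omega
        exact_mod_cast this
      have hm₁0 : (0:ℝ) ≤ (m₁:ℝ) := by positivity
      have hm₂0 : (0:ℝ) ≤ (m₂:ℝ) := by positivity
      have e1 : ε * (⌈Real.logb 2 m₁⌉ : ℝ) * m₁ ≤ ε * ((⌈Real.logb 2 N⌉ : ℝ) - 1) * m₁ :=
        mul_le_mul_of_nonneg_right (mul_le_mul_of_nonneg_left hc1' hε) hm₁0
      have e2 : ε * (⌈Real.logb 2 m₂⌉ : ℝ) * m₂ ≤ ε * ((⌈Real.logb 2 N⌉ : ℝ) - 1) * m₂ :=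
        mul_le_mul_of_nonneg_right (mul_le_mul_of_nonneg_left hc2' hε) hm₂0
      have e3 : ε * ((⌈Real.logb 2 N⌉ : ℝ) - 1) * m₁ + ε * ((⌈Real.logb 2 N⌉ : ℝ) - 1) * m₂
          = ε * ((⌈Real.logb 2 N⌉ : ℝ) - 1) * N := by
        rw [← hsum]; ring
      have e4 : ε * (N:ℝ) + ε * ((⌈Real.logb 2 N⌉ : ℝ) - 1) * N
          = ε * (⌈Real.logb 2 N⌉ : ℝ) * N := by ring
      linarith

end Main

/-- If `T` is a positive `ε`-minimum preserving operator, then for any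
`x₁, …, x_n` in the positive part of the closed unit ball,
`‖T(⋁ x_i) - ⋁ Tx_i‖ ≤ ε ⌈log₂ n⌉ n`. -/
theorem stmt18 (E F : Type*)
    [NormedAddCommGroup E] [Lattice E] [IsOrderedAddMonoid E] [HasSolidNorm E] [NormedSpace ℝ E] [CompleteSpace E]
    [NormedAddCommGroup F] [Lattice F] [IsOrderedAddMonoid F] [HasSolidNorm F] [NormedSpace ℝ F] [CompleteSpace F]
    (ε : ℝ) (hε : 0 ≤ ε) (T : E →L[ℝ] F)
    (hpos : ∀ x : E, 0 ≤ x → 0 ≤ T x)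
    (hMP : ∀ x y : E, 0 ≤ x → 0 ≤ y → ‖x‖ ≤ 1 → ‖y‖ ≤ 1 → ‖T x ⊓ T y - T (x ⊓ y)‖ ≤ ε)
    (n : ℕ) (hn : 1 ≤ n) (x : Fin n → E) (hx : ∀ i, 0 ≤ x i) (hx1 : ∀ i, ‖x i‖ ≤ 1) :
    ‖T ((univ : Finset (Fin n)).sup' (univ_nonempty_iff.2 (Fin.pos_iff_nonempty.1 hn)) x) -
        (univ : Finset (Fin n)).sup' (univ_nonempty_iff.2 (Fin.pos_iff_nonempty.1 hn))
          (fun i => T (x i))‖ ≤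
      ε * (⌈Real.logb 2 n⌉ : ℝ) * n := by
  have := aux_main ε hε T hpos hMP n (univ : Finset (Fin n))
    (univ_nonempty_iff.2 (Fin.pos_iff_nonempty.1 hn)) x (by simp)
    (fun i _ => hx i) (fun i _ => hx1 i)
  exact this
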